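/- In the Lie algebra so(n,1) ⊗ Q, the elements Q_i = (E_{i,n+1} + E_{n+1,i}) ⊗ λ̄i (i = 1,...,n) satisfy the relations [Q_i,[Q_i,Q_k]] − [Q_j,[Q_j,Q_k]] = (rj − ri)·Q_k whenever i ≠ k and j ≠ k. -/

import Mathlib

open MvPolynomial Matrix

noncomputable section

/-- The ideal generated by the polynomials `λᵢ² − λⱼ² + rᵢ − rⱼ`. -/
def LLIdeal (n : ℕ) (r : Fin n → ℂ) : Ideal (MvPolynomial (Fin n) ℂ) :=
  Ideal.span {p | ∃ i j : Fin n, p = X i ^ 2 - X j ^ 2 + C (r i) - C (r j)}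

/-- The algebra `Q` of polynomial functions on the curve. -/
abbrev LLQ (n : ℕ) (r : Fin n → ℂ) : Type := MvPolynomial (Fin n) ℂ ⧸ LLIdeal n r

/-- `λ̄ᵢ`, the image of `λᵢ` in `Q`. -/
def lamQ (n : ℕ) (r : Fin n → ℂ) (i : Fin n) : LLQ n r :=
  Ideal.Quotient.mk _ (X i)

/-- `λ̄ = λ̄ᵢ² + rᵢ` (independent of `i`). -/
def lambar (n : ℕ) (r : Fin n → ℂ) [NeZero n] : LLQ n r :=
  lamQ n r 0 ^ 2 + algebraMap ℂ _ (r 0)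

/-- Matrices of size `n+1` over `Q`; contains `so(n,1) ⊗ Q` with its commutator
Lie bracket. -/
abbrev LLM (n : ℕ) (r : Fin n → ℂ) : Type := Matrix (Fin (n+1)) (Fin (n+1)) (LLQ n r)

/-- `Q_i = (E_{i,n+1} + E_{n+1,i}) ⊗ λ̄ᵢ`. -/
def Qgen (n : ℕ) (r : Fin n → ℂ) (i : Fin n) : LLM n r :=
  lamQ n r i • (Matrix.single i.castSucc (Fin.last n) 1 + Matrix.single (Fin.last n) i.castSucc 1)

/-- `Q^{2k-1}_l = (E_{l,n+1} + E_{n+1,l}) ⊗ λ̄^{k-1} λ̄_l`. -/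
def Qodd (n : ℕ) (r : Fin n → ℂ) [NeZero n] (k : ℕ) (l : Fin n) : LLM n r :=
  (lambar n r ^ (k-1) * lamQ n r l) •
    (Matrix.single l.castSucc (Fin.last n) 1 + Matrix.single (Fin.last n) l.castSucc 1)

/-- `Q^{2k}_{ij} = (E_{i,j} − E_{j,i}) ⊗ λ̄^{k-1} λ̄ᵢ λ̄ⱼ`. -/
def Qeven (n : ℕ) (r : Fin n → ℂ) [NeZero n] (k : ℕ) (i j : Fin n) : LLM n r :=
  (lambar n r ^ (k-1) * lamQ n r i * lamQ n r j) •
    (Matrix.single i.castSucc j.castSucc 1 - Matrix.single j.castSucc i.castSucc 1)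

end

lemma bracket_aux {R : Type*} [CommRing R] {m : ℕ} (a b L : Fin m)
    (hab : a ≠ b) (haL : a ≠ L) (hbL : b ≠ L) :
    ⁅(Matrix.single a L (1:R) + Matrix.single L a 1),
      ⁅(Matrix.single a L (1:R) + Matrix.single L a 1),
        (Matrix.single b L (1:R) + Matrix.single L b 1)⁆⁆
      = Matrix.single b L (1:R) + Matrix.single L b 1 := by
  simp only [Ring.lie_def, mul_sub, sub_mul, add_mul, mul_add,
    single_mul_single_same, single_mul_single_of_ne, one_mul, ne_eq,
    hab, haL, hbL, Ne.symm hab, Ne.symm haL, Ne.symm hbL, not_false_iff,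
    mul_zero, zero_mul]
  abel

lemma lamQ_sq_sub (n : ℕ) (r : Fin n → ℂ) (i j : Fin n) :
    lamQ n r i ^ 2 - lamQ n r j ^ 2 = algebraMap ℂ _ (r j - r i) := by
  have h : Ideal.Quotient.mk (LLIdeal n r)
      (X i ^ 2 - X j ^ 2 + C (r i) - C (r j)) = 0 :=
    Ideal.Quotient.eq_zero_iff_mem.mpr (Ideal.subset_span ⟨i, j, rfl⟩)
  have halg : ∀ c : ℂ, algebraMap ℂ (LLQ n r) c = Ideal.Quotient.mk _ (C c) := fun c => rfl
  simp only [map_add, map_sub, map_pow] at h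
  rw [halg]
  simp only [map_sub]
  unfold lamQ
  linear_combination h

lemma lie_smul_smul {R : Type*} [CommRing R] {m : ℕ} (c d : R)
    (X Z : Matrix (Fin m) (Fin m) R) :
    ⁅c • X, ⁅c • X, d • Z⁆⁆ = (c * c * d) • ⁅X, ⁅X, Z⁆⁆ := by
  simp only [Ring.lie_def, Matrix.smul_mul, Matrix.mul_smul, smul_smul, smul_sub,
    mul_assoc, sub_mul, mul_sub]
  module

set_option synthInstance.maxHeartbeats 1000000 in
set_option maxHeartbeats 1000000 in
theorem stmt_2 (n : ℕ) [NeZero n] (hn : 3 ≤ n) (r : Fin n → ℂ) (hr : Function.Injective r) :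
    ∀ i j k : Fin n, i ≠ k → j ≠ k →
      ⁅Qgen n r i, ⁅Qgen n r i, Qgen n r k⁆⁆ - ⁅Qgen n r j, ⁅Qgen n r j, Qgen n r k⁆⁆
        = (r j - r i) • Qgen n r k := by
  intro i j k hik hjk
  have key : ∀ l : Fin n, l ≠ k →
      ⁅Qgen n r l, ⁅Qgen n r l, Qgen n r k⁆⁆
        = (lamQ n r l ^ 2 * lamQ n r k) •
          (Matrix.single k.castSucc (Fin.last n) (1 : LLQ n r)
            + Matrix.single (Fin.last n) k.castSucc 1) := by
    intro l hlk
    unfold Qgen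
    rw [lie_smul_smul,
      bracket_aux _ _ _ (fun h => hlk (Fin.castSucc_injective n h))
        (Fin.castSucc_lt_last l).ne (Fin.castSucc_lt_last k).ne, sq]
  rw [key i hik, key j hjk, Qgen]
  have hs : lamQ n r i ^ 2 * lamQ n r k - lamQ n r j ^ 2 * lamQ n r k
      = algebraMap ℂ _ (r j - r i) * lamQ n r k := by
    rw [← sub_mul, lamQ_sq_sub]
  simp only [← sub_smul, hs, ← smul_smul, algebraMap_smul]
  rw [lamQ_sq_sub, algebraMap_smul]
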